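/- Let P = u uᵀ for a unit vector u, and let (X^{(l)}) be a sequence of nonzero matrices in ℝ^{N×d} such that ‖(I−P)X^{(l)}‖_F / ‖P X^{(l)}‖_F → 0 as l → ∞. Then NumRank(X^{(l)}) → 1 as l → ∞. -/

import Mathlib

open scoped BigOperators

noncomputable def vecNorm {n : ℕ} (v : Fin n → ℝ) : ℝ := Real.sqrt (∑ i, v i ^ 2)

noncomputable def frobNorm {N d : ℕ} (X : Matrix (Fin N) (Fin d) ℝ) : ℝ :=
  Real.sqrt (∑ i, ∑ j, X i j ^ 2)

noncomputable def specNorm {N d : ℕ} (X : Matrix (Fin N) (Fin d) ℝ) : ℝ :=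
  sSup {c : ℝ | ∃ v : Fin d → ℝ, vecNorm v ≤ 1 ∧ c = vecNorm (X.mulVec v)}

noncomputable def numRank {N d : ℕ} (X : Matrix (Fin N) (Fin d) ℝ) : ℝ :=
  frobNorm X ^ 2 / specNorm X ^ 2

def frobInner {N d : ℕ} (A B : Matrix (Fin N) (Fin d) ℝ) : ℝ := ∑ i, ∑ j, A i j * B i j

/-- Hilbert projective distance on the open positive cone. -/
noncomputable def dH {n : ℕ} (x y : Fin n → ℝ) : ℝ :=
  Real.log ((⨆ i, x i / y i) / (⨅ i, x i / y i))

/-- Apply a map `σ : ℝ^N → ℝ^N` to each column of a matrix. -/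
def colApply {N d : ℕ} (σ : (Fin N → ℝ) → (Fin N → ℝ)) (M : Matrix (Fin N) (Fin d) ℝ) :
    Matrix (Fin N) (Fin d) ℝ := Matrix.of fun i j => σ (fun k => M k j) i

-- auxiliary lemmas

lemma vecNorm_nonneg {n : ℕ} (v : Fin n → ℝ) : 0 ≤ vecNorm v := Real.sqrt_nonneg _

lemma vecNorm_sq {n : ℕ} (v : Fin n → ℝ) : vecNorm v ^ 2 = ∑ i, v i ^ 2 :=
  Real.sq_sqrt (Finset.sum_nonneg fun _ _ => sq_nonneg _)

lemma frobNorm_nonneg {N d : ℕ} (X : Matrix (Fin N) (Fin d) ℝ) : 0 ≤ frobNorm X :=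
  Real.sqrt_nonneg _

lemma frobNorm_sq {N d : ℕ} (X : Matrix (Fin N) (Fin d) ℝ) :
    frobNorm X ^ 2 = ∑ i, ∑ j, X i j ^ 2 :=
  Real.sq_sqrt (Finset.sum_nonneg fun _ _ => Finset.sum_nonneg fun _ _ => sq_nonneg _)

lemma frobNorm_pos {N d : ℕ} {X : Matrix (Fin N) (Fin d) ℝ} (hX : X ≠ 0) :
    0 < frobNorm X := by
  rcases (frobNorm_nonneg X).lt_or_eq with h | h
  · exact h
  · exfalso
    apply hX
    have h0 : ∑ i, ∑ j, X i j ^ 2 = 0 := by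
      have := (Real.sqrt_eq_zero (Finset.sum_nonneg fun _ _ =>
        Finset.sum_nonneg fun _ _ => sq_nonneg _)).mp h.symm
      exact this
    ext i j
    have h1 := (Finset.sum_eq_zero_iff_of_nonneg (fun i _ =>
      Finset.sum_nonneg fun j _ => sq_nonneg (X i j))).mp h0 i (Finset.mem_univ i)
    have h2 := (Finset.sum_eq_zero_iff_of_nonneg (fun j _ => sq_nonneg (X i j))).mp h1 j
      (Finset.mem_univ j)
    exact sq_eq_zero_iff.mp h2

lemma specNorm_bound {N d : ℕ} (X : Matrix (Fin N) (Fin d) ℝ) :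
    ∀ c ∈ {c : ℝ | ∃ v : Fin d → ℝ, vecNorm v ≤ 1 ∧ c = vecNorm (X.mulVec v)},
      c ≤ frobNorm X := by
  rintro c ⟨v, hv, rfl⟩
  have hv2 : ∑ j, v j ^ 2 ≤ 1 := by
    have := vecNorm_sq v
    nlinarith [vecNorm_nonneg v]
  apply Real.sqrt_le_sqrt
  calc ∑ i, X.mulVec v i ^ 2
      ≤ ∑ i, (∑ j, X i j ^ 2) * (∑ j, v j ^ 2) := by
        apply Finset.sum_le_sum
        intro i _
        simp only [Matrix.mulVec, dotProduct]
        exact Finset.sum_mul_sq_le_sq_mul_sq Finset.univ (fun j => X i j) v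
    _ ≤ ∑ i, ∑ j, X i j ^ 2 := by
        apply Finset.sum_le_sum
        intro i _
        have h1 : 0 ≤ ∑ j, X i j ^ 2 := Finset.sum_nonneg fun _ _ => sq_nonneg _
        nlinarith

lemma specNorm_set_nonempty {N d : ℕ} (X : Matrix (Fin N) (Fin d) ℝ) :
    (0 : ℝ) ∈ {c : ℝ | ∃ v : Fin d → ℝ, vecNorm v ≤ 1 ∧ c = vecNorm (X.mulVec v)} := by
  refine ⟨0, ?_, ?_⟩ <;> simp [vecNorm, Matrix.mulVec_zero]

lemma specNorm_le_frobNorm {N d : ℕ} (X : Matrix (Fin N) (Fin d) ℝ) :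
    specNorm X ≤ frobNorm X :=
  csSup_le ⟨0, specNorm_set_nonempty X⟩ (specNorm_bound X)

section main
variable {N d : ℕ} (u : Fin N → ℝ)

lemma PX_apply (X : Matrix (Fin N) (Fin d) ℝ) (i : Fin N) (j : Fin d) :
    (Matrix.vecMulVec u u * X) i j = u i * ∑ k, u k * X k j := by
  simp [Matrix.mul_apply, Matrix.vecMulVec_apply, Finset.mul_sum, mul_assoc]

lemma frob_PX (hu : vecNorm u = 1) (X : Matrix (Fin N) (Fin d) ℝ) :
    frobNorm (Matrix.vecMulVec u u * X) = vecNorm (fun j => ∑ k, u k * X k j) := by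
  have hu2 : ∑ i, u i ^ 2 = 1 := by
    have := vecNorm_sq u; rw [hu] at this; linarith
  unfold frobNorm vecNorm
  congr 1
  calc ∑ i, ∑ j, (Matrix.vecMulVec u u * X) i j ^ 2
      = ∑ i, ∑ j, u i ^ 2 * (∑ k, u k * X k j) ^ 2 := by
        apply Finset.sum_congr rfl; intro i _
        apply Finset.sum_congr rfl; intro j _
        rw [PX_apply]; ring
    _ = (∑ i, u i ^ 2) * ∑ j, (∑ k, u k * X k j) ^ 2 := by
        rw [Finset.sum_mul]
        apply Finset.sum_congr rfl; intro i _
        rw [Finset.mul_sum]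
    _ = ∑ j, (∑ k, u k * X k j) ^ 2 := by rw [hu2, one_mul]

lemma pythagoras (hu : vecNorm u = 1) (X : Matrix (Fin N) (Fin d) ℝ) :
    frobNorm X ^ 2 = frobNorm (Matrix.vecMulVec u u * X) ^ 2
      + frobNorm ((1 - Matrix.vecMulVec u u) * X) ^ 2 := by
  have hu2 : ∑ i, u i ^ 2 = 1 := by
    have := vecNorm_sq u; rw [hu] at this; linarith
  set w : Fin d → ℝ := fun j => ∑ k, u k * X k j with hw
  have hsub : (1 - Matrix.vecMulVec u u) * X = X - Matrix.vecMulVec u u * X := by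
    rw [Matrix.sub_mul, Matrix.one_mul]
  have hcross : ∑ i, ∑ j, u i * w j * (X i j - u i * w j) = 0 := by
    rw [Finset.sum_comm]
    apply Finset.sum_eq_zero
    intro j _
    have : ∑ i, u i * w j * (X i j - u i * w j)
        = w j * (∑ i, u i * X i j) - w j ^ 2 * ∑ i, u i ^ 2 := by
      rw [Finset.mul_sum, Finset.mul_sum, ← Finset.sum_sub_distrib]
      apply Finset.sum_congr rfl; intro i _; ring
    rw [this, hu2]
    simp [hw]
    ring
  rw [frobNorm_sq, frobNorm_sq, frobNorm_sq, hsub]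
  have expand : ∑ i, ∑ j, X i j ^ 2
      = ((∑ i, ∑ j, (Matrix.vecMulVec u u * X) i j ^ 2)
          + ∑ i, ∑ j, (X - Matrix.vecMulVec u u * X) i j ^ 2)
        + 2 * ∑ i, ∑ j, u i * w j * (X i j - u i * w j) := by
    rw [Finset.mul_sum, ← Finset.sum_add_distrib, ← Finset.sum_add_distrib]
    apply Finset.sum_congr rfl; intro i _
    rw [Finset.mul_sum, ← Finset.sum_add_distrib, ← Finset.sum_add_distrib]
    apply Finset.sum_congr rfl; intro j _
    rw [Matrix.sub_apply, PX_apply]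
    ring
  rw [expand, hcross]
  ring

lemma frob_PX_le_specNorm (hu : vecNorm u = 1) (X : Matrix (Fin N) (Fin d) ℝ)
    (hA : Matrix.vecMulVec u u * X ≠ 0) :
    frobNorm (Matrix.vecMulVec u u * X) ≤ specNorm X := by
  set w : Fin d → ℝ := fun j => ∑ k, u k * X k j with hw
  have hfw : frobNorm (Matrix.vecMulVec u u * X) = vecNorm w := frob_PX u hu X
  have hwpos : 0 < vecNorm w := hfw ▸ frobNorm_pos hA
  set v : Fin d → ℝ := fun j => (vecNorm w)⁻¹ * w j with hv
  have hv2 : ∑ j, v j ^ 2 = 1 := by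
    have : ∑ j, v j ^ 2 = (vecNorm w)⁻¹ ^ 2 * ∑ j, w j ^ 2 := by
      rw [Finset.mul_sum]; apply Finset.sum_congr rfl; intro j _; rw [hv]; ring
    rw [this, ← vecNorm_sq w]
    field_simp
  have hvnorm : vecNorm v ≤ 1 := by
    unfold vecNorm; rw [hv2, Real.sqrt_one]
  have hmem : vecNorm (X.mulVec v) ∈
      {c : ℝ | ∃ v : Fin d → ℝ, vecNorm v ≤ 1 ∧ c = vecNorm (X.mulVec v)} :=
    ⟨v, hvnorm, rfl⟩
  have hle : vecNorm w ≤ vecNorm (X.mulVec v) := by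
    have hinner : ∑ i, u i * X.mulVec v i = vecNorm w := by
      have h1 : ∑ i, u i * X.mulVec v i = (vecNorm w)⁻¹ * ∑ j, w j ^ 2 := by
        simp only [Matrix.mulVec, dotProduct]
        calc ∑ i, u i * ∑ j, X i j * v j
            = ∑ i, ∑ j, v j * (u i * X i j) := by
              apply Finset.sum_congr rfl; intro i _
              rw [Finset.mul_sum]
              apply Finset.sum_congr rfl; intro j _; ring
          _ = ∑ j, ∑ i, v j * (u i * X i j) := Finset.sum_comm
          _ = ∑ j, v j * w j := by
              apply Finset.sum_congr rfl; intro j _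
              rw [← Finset.mul_sum]
          _ = (vecNorm w)⁻¹ * ∑ j, w j ^ 2 := by
              rw [Finset.mul_sum]
              apply Finset.sum_congr rfl; intro j _
              simp only [hv]; ring
      rw [h1, ← vecNorm_sq w]
      field_simp
    have hcs : ∑ i, u i * X.mulVec v i ≤ vecNorm u * vecNorm (X.mulVec v) :=
      Real.sum_mul_le_sqrt_mul_sqrt _ _ _
    rw [hinner, hu, one_mul] at hcs
    exact hcs
  have hbdd : BddAbove {c : ℝ | ∃ v : Fin d → ℝ, vecNorm v ≤ 1 ∧ c = vecNorm (X.mulVec v)} :=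
    ⟨frobNorm X, specNorm_bound X⟩
  calc frobNorm (Matrix.vecMulVec u u * X) = vecNorm w := hfw
    _ ≤ vecNorm (X.mulVec v) := hle
    _ ≤ specNorm X := le_csSup hbdd hmem

end main

theorem stmt8 {N d : ℕ} (u : Fin N → ℝ) (hu : vecNorm u = 1)
    (X : ℕ → Matrix (Fin N) (Fin d) ℝ) (hX : ∀ l, X l ≠ 0)
    (hPX : ∀ᶠ l in Filter.atTop, Matrix.vecMulVec u u * X l ≠ 0)
    (hratio : Filter.Tendsto
      (fun l => frobNorm ((1 - Matrix.vecMulVec u u) * X l) /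
        frobNorm (Matrix.vecMulVec u u * X l)) Filter.atTop (nhds 0)) :
    Filter.Tendsto (fun l => numRank (X l)) Filter.atTop (nhds 1) := by
  set r : ℕ → ℝ := fun l => frobNorm ((1 - Matrix.vecMulVec u u) * X l) /
    frobNorm (Matrix.vecMulVec u u * X l) with hr
  have hupper : Filter.Tendsto (fun l => 1 + r l ^ 2) Filter.atTop (nhds 1) := by
    have h2 : Filter.Tendsto (fun l => r l ^ 2) Filter.atTop (nhds 0) := by
      have := hratio.pow 2
      simpa using this
    simpa using (tendsto_const_nhds (x := (1:ℝ))).add h2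
  apply tendsto_of_tendsto_of_tendsto_of_le_of_le' tendsto_const_nhds hupper
  · filter_upwards [hPX] with l hl
    have ha : 0 < frobNorm (Matrix.vecMulVec u u * X l) := frobNorm_pos hl
    have haS : frobNorm (Matrix.vecMulVec u u * X l) ≤ specNorm (X l) :=
      frob_PX_le_specNorm u hu (X l) hl
    have hSF : specNorm (X l) ≤ frobNorm (X l) := specNorm_le_frobNorm (X l)
    have hSpos : 0 < specNorm (X l) := lt_of_lt_of_le ha haS
    rw [numRank]
    rw [le_div_iff₀ (by positivity)]
    nlinarith
  · filter_upwards [hPX] with l hl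
    have ha : 0 < frobNorm (Matrix.vecMulVec u u * X l) := frobNorm_pos hl
    have haS : frobNorm (Matrix.vecMulVec u u * X l) ≤ specNorm (X l) :=
      frob_PX_le_specNorm u hu (X l) hl
    have hSpos : 0 < specNorm (X l) := lt_of_lt_of_le ha haS
    have hb : 0 ≤ frobNorm ((1 - Matrix.vecMulVec u u) * X l) := frobNorm_nonneg _
    have hpy := pythagoras u hu (X l)
    rw [numRank, div_le_iff₀ (by positivity)]
    have hr2 : r l ^ 2 = frobNorm ((1 - Matrix.vecMulVec u u) * X l) ^ 2 /
        frobNorm (Matrix.vecMulVec u u * X l) ^ 2 := by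
      rw [hr]; rw [div_pow]
    rw [hr2]
    have hS2 : frobNorm (Matrix.vecMulVec u u * X l) ^ 2 ≤ specNorm (X l) ^ 2 := by
      nlinarith
    have hdiv : frobNorm ((1 - Matrix.vecMulVec u u) * X l) ^ 2 ≤
        frobNorm ((1 - Matrix.vecMulVec u u) * X l) ^ 2 /
          frobNorm (Matrix.vecMulVec u u * X l) ^ 2 * specNorm (X l) ^ 2 := by
      rw [div_mul_eq_mul_div, le_div_iff₀ (by positivity)]
      nlinarith
    nlinarith
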